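/- Let n ≥ 2 and L_1 ≥ L_2 > 0 with ∑_{i=1}^n L_i · L_2 > L_1². Then 1 − (√((L_1+L_2)∑_{i=1}^n L_i − L_1²) + √(L_1 L_2))² / (n(L_1+L_2)²) < 1 − 1/n. -/

import Mathlib

theorem stmt_10 (n : ℕ) (hn : 2 ≤ n) (L : ℕ → ℝ)
    (hpos : ∀ i < n, 0 < L i)
    (hdec : ∀ i j, i ≤ j → j < n → L j ≤ L i)
    (hcond : (L 0)^2 < (∑ i ∈ Finset.range n, L i) * L 1) :
    1 - (Real.sqrt ((L 0 + L 1) * (∑ i ∈ Finset.range n, L i) - (L 0)^2) +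
        Real.sqrt (L 0 * L 1))^2 / ((n : ℝ) * (L 0 + L 1)^2) < 1 - 1/(n : ℝ) := by
  set a := L 0 with ha0
  set b := L 1 with hb0
  set S := ∑ i ∈ Finset.range n, L i with hS0
  have ha : 0 < a := hpos 0 (by omega)
  have hb : 0 < b := hpos 1 (by omega)
  have hba : b ≤ a := hdec 0 1 (by omega) (by omega)
  have hS : a + b ≤ S := by
    have hsub : ({0, 1} : Finset ℕ) ⊆ Finset.range n := by
      intro i hi
      simp only [Finset.mem_insert, Finset.mem_singleton] at hi
      rcases hi with h | h <;> simp [h] <;> omega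
    have := Finset.sum_le_sum_of_subset_of_nonneg hsub
      (fun i hi _ => (hpos i (Finset.mem_range.mp hi)).le)
    simpa [Finset.sum_pair (by norm_num : (0:ℕ) ≠ 1)] using this
  set A := (a + b) * S - a ^ 2 with hA0
  have hApos : 0 < A := by nlinarith
  have hBpos : 0 < a * b := mul_pos ha hb
  -- √A * √B > a^2
  have hAB : a ^ 2 < Real.sqrt A * Real.sqrt (a * b) := by
    rw [← Real.sqrt_mul hApos.le]
    have h4 : a ^ 2 * a ^ 2 < A * (a * b) := by nlinarith [mul_lt_mul_of_pos_left hcond hb, mul_pos ha hb]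
    have := Real.sqrt_lt_sqrt (by positivity) h4
    rwa [show a ^ 2 * a ^ 2 = (a ^ 2) ^ 2 by ring, Real.sqrt_sq (by positivity)] at this
  have hsqA : Real.sqrt A ^ 2 = A := Real.sq_sqrt hApos.le
  have hsqB : Real.sqrt (a * b) ^ 2 = a * b := Real.sq_sqrt hBpos.le
  have hA1 : 2 * a * b + b ^ 2 ≤ A := by nlinarith
  have hsum : (a + b) ^ 2 < (Real.sqrt A + Real.sqrt (a * b)) ^ 2 := by
    nlinarith [hAB, hsqA, hsqB, hA1]
  have hn' : (0 : ℝ) < n := by positivity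
  have hkey : 1 / (n : ℝ) < (Real.sqrt A + Real.sqrt (a * b)) ^ 2 / ((n : ℝ) * (a + b) ^ 2) := by
    rw [div_lt_div_iff₀ hn' (by positivity)]
    nlinarith
  linarith
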